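/- Let T, S be bounded operators on a complex Hilbert space H and n an odd positive integer ≥ 3. Let R be the n×n block operator matrix on H^n with T on the main diagonal, S on the anti-diagonal off the center (the central entry, lying on both diagonals, is T), and zeros elsewhere. Then w(R) = max{w(T + S), w(T), w(T − S)}. -/

import Mathlib

noncomputable def numRadius {E : Type*} [NormedAddCommGroup E] [InnerProductSpace ℂ E]
    (T : E →L[ℂ] E) : ℝ :=
  sSup {r : ℝ | ∃ x : E, ‖x‖ = 1 ∧ r = ‖(inner ℂ (T x) x : ℂ)‖}

noncomputable def blockOp {H : Type*} [NormedAddCommGroup H] [InnerProductSpace ℂ H]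
    (n : ℕ) (M : Fin n → Fin n → H →L[ℂ] H) :
    (PiLp 2 fun _ : Fin n => H) →L[ℂ] (PiLp 2 fun _ : Fin n => H) :=
  (PiLp.continuousLinearEquiv 2 ℂ (fun _ : Fin n => H)).symm.toContinuousLinearMap ∘L
    (ContinuousLinearMap.pi fun i => ∑ j, (M i j).comp (ContinuousLinearMap.proj j)) ∘L
    (PiLp.continuousLinearEquiv 2 ℂ (fun _ : Fin n => H)).toContinuousLinearMap

section Aux

variable {E : Type*} [NormedAddCommGroup E] [InnerProductSpace ℂ E]

lemma numRadius_bddAbove (A : E →L[ℂ] E) :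
    BddAbove {r : ℝ | ∃ x : E, ‖x‖ = 1 ∧ r = ‖(inner ℂ (A x) x : ℂ)‖} := by
  refine ⟨‖A‖, ?_⟩
  rintro r ⟨x, hx, rfl⟩
  calc ‖(inner ℂ (A x) x : ℂ)‖ ≤ ‖A x‖ * ‖x‖ := norm_inner_le_norm _ _
    _ ≤ ‖A‖ * ‖x‖ * ‖x‖ := by gcongr; exact A.le_opNorm x
    _ = ‖A‖ := by rw [hx]; ring

lemma numRadius_nonneg (A : E →L[ℂ] E) : 0 ≤ numRadius A :=
  Real.sSup_nonneg (by rintro r ⟨x, hx, rfl⟩; positivity)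

lemma inner_le_numRadius (A : E →L[ℂ] E) (x : E) (hx : ‖x‖ = 1) :
    ‖(inner ℂ (A x) x : ℂ)‖ ≤ numRadius A :=
  le_csSup (numRadius_bddAbove A) ⟨x, hx, rfl⟩

lemma numRadius_le (A : E →L[ℂ] E) (b : ℝ) (hb : 0 ≤ b)
    (h : ∀ x : E, ‖x‖ = 1 → ‖(inner ℂ (A x) x : ℂ)‖ ≤ b) : numRadius A ≤ b :=
  Real.sSup_le (by rintro r ⟨x, hx, rfl⟩; exact h x hx) hb

lemma inner_le_numRadius' (A : E →L[ℂ] E) (x : E) :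
    ‖(inner ℂ (A x) x : ℂ)‖ ≤ numRadius A * ‖x‖ ^ 2 := by
  rcases eq_or_ne x 0 with rfl | hx
  · simp
  · have hnx : ‖x‖ ≠ 0 := norm_ne_zero_iff.2 hx
    set y : E := ‖x‖⁻¹ • x with hy
    have hny : ‖y‖ = 1 := by
      rw [hy, norm_smul, norm_inv, norm_norm, inv_mul_cancel₀ hnx]
    have hxy : x = (‖x‖ : ℂ) • y := by
      rw [hy, smul_comm, ← Complex.coe_smul, smul_smul]
      norm_cast
      rw [inv_mul_cancel₀ hnx, one_smul]
    have : (inner ℂ (A x) x : ℂ) = (‖x‖ : ℂ)^2 * inner ℂ (A y) y := by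
      conv_lhs => rw [hxy]
      rw [map_smul, inner_smul_left, inner_smul_right]
      ring_nf
      rw [Complex.conj_ofReal]
      ring
    rw [this, norm_mul]
    have h2 : ‖((‖x‖:ℂ))^2‖ = ‖x‖^2 := by
      rw [norm_pow, Complex.norm_real, norm_norm]
    rw [h2, mul_comm]
    gcongr
    exact inner_le_numRadius A y hny

lemma sum_pair_rev {α : Type*} [AddCommMonoid α] (n : ℕ) (f : Fin n → α) :
    ∑ i, f i = (∑ i ∈ Finset.univ.filter (fun i : Fin n => i < i.rev), (f i + f i.rev))
      + ∑ i ∈ Finset.univ.filter (fun i : Fin n => i = i.rev), f i := by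
  classical
  rw [← Finset.sum_filter_add_sum_filter_not Finset.univ (fun i : Fin n => i = i.rev) f]
  rw [add_comm]
  congr 1
  have : Finset.univ.filter (fun i : Fin n => ¬ i = i.rev)
      = Finset.univ.filter (fun i : Fin n => i < i.rev)
        ∪ Finset.univ.filter (fun i : Fin n => i.rev < i) := by
    ext i
    simp only [Finset.mem_filter, Finset.mem_union, Finset.mem_univ, true_and]
    constructor
    · intro h; rcases lt_or_gt_of_ne h with h' | h'
      · exact Or.inl h'
      · exact Or.inr h'
    · rintro (h | h) <;> [exact ne_of_lt h; exact (ne_of_lt h).symm]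
  rw [this, Finset.sum_union]
  · rw [Finset.sum_add_distrib]
    congr 1
    refine Finset.sum_nbij' (fun i => i.rev) (fun i => i.rev) ?_ ?_ ?_ ?_ ?_
    · intro a ha
      simp only [Finset.mem_filter, Finset.mem_univ, true_and] at ha ⊢
      simpa using ha
    · intro a ha
      simp only [Finset.mem_filter, Finset.mem_univ, true_and] at ha ⊢
      simpa using ha
    · intro a _; simp
    · intro a _; simp
    · intro a _; simp
  · rw [Finset.disjoint_left]
    intro i hi hi'
    simp only [Finset.mem_filter, Finset.mem_univ, true_and] at hi hi'
    exact absurd (hi.trans hi') (lt_irrefl _)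

end Aux

variable {H : Type*} [NormedAddCommGroup H] [InnerProductSpace ℂ H]

lemma blockOp_apply (n : ℕ) (M : Fin n → Fin n → H →L[ℂ] H)
    (ξ : PiLp 2 fun _ : Fin n => H) (i : Fin n) :
    blockOp n M ξ i = ∑ j, M i j (ξ j) := by
  simp [blockOp, PiLp.continuousLinearEquiv, ContinuousLinearMap.sum_apply]
  rfl

lemma inner_blockOp (n : ℕ) (M : Fin n → Fin n → H →L[ℂ] H)
    (ξ : PiLp 2 fun _ : Fin n => H) :
    (inner ℂ (blockOp n M ξ) ξ : ℂ) = ∑ i, ∑ j, (inner ℂ (M i j (ξ j)) (ξ i) : ℂ) := by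
  rw [PiLp.inner_apply]
  congr 1
  ext i
  rw [blockOp_apply, sum_inner]

lemma rev_of_add (n : ℕ) (i j : Fin n) (h : (i : ℕ) + (j : ℕ) = n - 1) : j = i.rev := by
  have hi := i.isLt
  have hj := j.isLt
  ext
  rw [Fin.val_rev]
  omega

lemma inner_R (T S : H →L[ℂ] H) (n : ℕ) (ξ : PiLp 2 fun _ : Fin n => H) :
    (inner ℂ (blockOp n (fun i j =>
        if i = j then T else if (i : ℕ) + (j : ℕ) = n - 1 then S else 0) ξ) ξ : ℂ)
    = ∑ i, ((inner ℂ (T (ξ i)) (ξ i) : ℂ)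
        + if i = i.rev then 0 else (inner ℂ (S (ξ i.rev)) (ξ i) : ℂ)) := by
  rw [inner_blockOp]
  congr 1
  ext i
  have hzero : ∀ j ∈ Finset.univ, j ∉ ({i, i.rev} : Finset (Fin n)) →
      (inner ℂ ((if i = j then T else if (i : ℕ) + (j : ℕ) = n - 1 then S else 0) (ξ j)) (ξ i) : ℂ) = 0 := by
    intro j _ hj
    simp only [Finset.mem_insert, Finset.mem_singleton, not_or] at hj
    rw [if_neg (fun h => hj.1 h.symm), if_neg (fun h => hj.2 (rev_of_add n i j h))]
    simp
  rw [← Finset.sum_subset (Finset.subset_univ {i, i.rev}) hzero]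
  by_cases hir : i = i.rev
  · rw [if_pos hir, ← hir]
    simp
  · rw [if_neg hir, Finset.sum_pair hir]
    have h1 : (i : ℕ) + (i.rev : ℕ) = n - 1 := by
      have := i.isLt
      rw [Fin.val_rev]
      omega
    rw [if_pos rfl, if_neg hir, if_pos h1]

lemma pair_bound (T S : H →L[ℂ] H) (N : ℝ)
    (h1 : numRadius (T + S) ≤ N) (h3 : numRadius (T - S) ≤ N) (a b : H) :
    ‖((inner ℂ (T a) a : ℂ) + inner ℂ (S b) a) + ((inner ℂ (T b) b : ℂ) + inner ℂ (S a) b)‖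
      ≤ N * (‖a‖ ^ 2 + ‖b‖ ^ 2) := by
  have key : ((inner ℂ (T a) a : ℂ) + inner ℂ (S b) a) + ((inner ℂ (T b) b : ℂ) + inner ℂ (S a) b)
      = ((inner ℂ ((T + S) (a + b)) (a + b) : ℂ) + inner ℂ ((T - S) (a - b)) (a - b)) / 2 := by
    simp only [ContinuousLinearMap.add_apply, ContinuousLinearMap.sub_apply, map_add, map_sub,
      inner_add_left, inner_add_right, inner_sub_left, inner_sub_right]
    ring
  rw [key]
  have hpar : ‖a + b‖ ^ 2 + ‖a - b‖ ^ 2 = 2 * (‖a‖ ^ 2 + ‖b‖ ^ 2) := by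
    have := parallelogram_law_with_norm ℂ a b
    ring_nf at this ⊢
    linarith
  calc ‖((inner ℂ ((T + S) (a + b)) (a + b) : ℂ) + inner ℂ ((T - S) (a - b)) (a - b)) / 2‖
      = ‖(inner ℂ ((T + S) (a + b)) (a + b) : ℂ) + inner ℂ ((T - S) (a - b)) (a - b)‖ / 2 := by
        rw [norm_div]; norm_num
    _ ≤ (‖(inner ℂ ((T + S) (a + b)) (a + b) : ℂ)‖ + ‖(inner ℂ ((T - S) (a - b)) (a - b) : ℂ)‖) / 2 := by
        gcongr; exact norm_add_le _ _
    _ ≤ (N * ‖a + b‖ ^ 2 + N * ‖a - b‖ ^ 2) / 2 := by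
        gcongr
        · exact (inner_le_numRadius' (T + S) (a + b)).trans
            (mul_le_mul_of_nonneg_right h1 (sq_nonneg _))
        · exact (inner_le_numRadius' (T - S) (a - b)).trans
            (mul_le_mul_of_nonneg_right h3 (sq_nonneg _))
    _ = N * (‖a + b‖ ^ 2 + ‖a - b‖ ^ 2) / 2 := by ring
    _ = N * (‖a‖ ^ 2 + ‖b‖ ^ 2) := by rw [hpar]; ring

lemma upper_bound (T S : H →L[ℂ] H) (n : ℕ) :
    numRadius (blockOp n (fun i j =>
        if i = j then T else if (i : ℕ) + (j : ℕ) = n - 1 then S else 0))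
      ≤ max (numRadius (T + S)) (max (numRadius T) (numRadius (T - S))) := by
  set N := max (numRadius (T + S)) (max (numRadius T) (numRadius (T - S))) with hN
  have h1 : numRadius (T + S) ≤ N := le_max_left _ _
  have h2 : numRadius T ≤ N := le_trans (le_max_left _ _) (le_max_right _ _)
  have h3 : numRadius (T - S) ≤ N := le_trans (le_max_right _ _) (le_max_right _ _)
  have hN0 : 0 ≤ N := le_trans (numRadius_nonneg _) h1
  refine numRadius_le _ N hN0 ?_
  intro ξ hξ
  rw [inner_R, sum_pair_rev]
  have hsum : ∑ i, ‖ξ i‖ ^ 2 = 1 := by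
    rw [← PiLp.norm_sq_eq_of_L2, hξ]; norm_num
  set f : Fin n → ℂ := fun i => (inner ℂ (T (ξ i)) (ξ i) : ℂ)
      + if i = i.rev then 0 else (inner ℂ (S (ξ i.rev)) (ξ i) : ℂ) with hf
  calc ‖(∑ i ∈ Finset.univ.filter (fun i : Fin n => i < i.rev), (f i + f i.rev))
        + ∑ i ∈ Finset.univ.filter (fun i : Fin n => i = i.rev), f i‖
      ≤ ‖∑ i ∈ Finset.univ.filter (fun i : Fin n => i < i.rev), (f i + f i.rev)‖
        + ‖∑ i ∈ Finset.univ.filter (fun i : Fin n => i = i.rev), f i‖ := norm_add_le _ _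
    _ ≤ (∑ i ∈ Finset.univ.filter (fun i : Fin n => i < i.rev), ‖f i + f i.rev‖)
        + ∑ i ∈ Finset.univ.filter (fun i : Fin n => i = i.rev), ‖f i‖ :=
        add_le_add (norm_sum_le _ _) (norm_sum_le _ _)
    _ ≤ (∑ i ∈ Finset.univ.filter (fun i : Fin n => i < i.rev), N * (‖ξ i‖ ^ 2 + ‖ξ i.rev‖ ^ 2))
        + ∑ i ∈ Finset.univ.filter (fun i : Fin n => i = i.rev), N * ‖ξ i‖ ^ 2 := by
        refine add_le_add (Finset.sum_le_sum ?_) (Finset.sum_le_sum ?_)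
        · intro i hi
          rw [Finset.mem_filter] at hi
          have hne : i ≠ i.rev := ne_of_lt hi.2
          have hne3 : i.rev ≠ i := fun h => hne h.symm
          rw [hf]
          simp only [Fin.rev_rev, if_neg hne, if_neg hne3]
          exact pair_bound T S N h1 h3 (ξ i) (ξ i.rev)
        · intro i hi
          rw [Finset.mem_filter] at hi
          rw [hf]
          simp only [if_pos hi.2, add_zero]
          exact (inner_le_numRadius' T (ξ i)).trans
            (mul_le_mul_of_nonneg_right h2 (sq_nonneg _))
    _ = N * ((∑ i ∈ Finset.univ.filter (fun i : Fin n => i < i.rev), (‖ξ i‖ ^ 2 + ‖ξ i.rev‖ ^ 2))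
        + ∑ i ∈ Finset.univ.filter (fun i : Fin n => i = i.rev), ‖ξ i‖ ^ 2) := by
        rw [mul_add, Finset.mul_sum, Finset.mul_sum]
    _ = N * 1 := by
        congr 1
        rw [← hsum, sum_pair_rev n (fun i => ‖ξ i‖ ^ 2)]
    _ = N := mul_one N

lemma lower_T (T S : H →L[ℂ] H) (n : ℕ) (hn : 3 ≤ n) (hodd : Odd n) :
    numRadius T ≤ numRadius (blockOp n (fun i j =>
        if i = j then T else if (i : ℕ) + (j : ℕ) = n - 1 then S else 0)) := by
  obtain ⟨m, hm⟩ := hodd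
  refine Real.sSup_le ?_ (numRadius_nonneg _)
  rintro r ⟨x, hx, rfl⟩
  set c : Fin n := ⟨m, by omega⟩ with hc
  have hcr : c = c.rev := by
    ext; rw [Fin.val_rev]; simp only [hc]; omega
  set ξ : PiLp 2 (fun _ : Fin n => H) := WithLp.toLp 2 (fun i => if i = c then x else 0) with hξ
  have hξ1 : ‖ξ‖ = 1 := by
    have h2 : ‖ξ‖ ^ 2 = 1 := by
      rw [PiLp.norm_sq_eq_of_L2, Finset.sum_eq_single c]
      · simp [hξ, hx]
      · intro i _ hi; simp [hξ, hi]
      · simp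
    rw [← Real.sqrt_one, ← h2, Real.sqrt_sq (norm_nonneg _)]
  have hinner : (inner ℂ (blockOp n (fun i j =>
        if i = j then T else if (i : ℕ) + (j : ℕ) = n - 1 then S else 0) ξ) ξ : ℂ)
      = inner ℂ (T x) x := by
    rw [inner_R, Finset.sum_eq_single c]
    · rw [if_pos hcr, add_zero]
      simp [hξ]
    · intro i _ hi
      simp [hξ, hi]
    · simp
  rw [← hinner]
  exact inner_le_numRadius _ ξ hξ1

lemma lower_eps (T S : H →L[ℂ] H) (n : ℕ) (hn : 3 ≤ n) (ε : ℂ) (hε : ε = 1 ∨ ε = -1) :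
    numRadius (T + ε • S) ≤ numRadius (blockOp n (fun i j =>
        if i = j then T else if (i : ℕ) + (j : ℕ) = n - 1 then S else 0)) := by
  refine Real.sSup_le ?_ (numRadius_nonneg _)
  rintro r ⟨x, hx, rfl⟩
  set a : ℝ := (Real.sqrt 2)⁻¹ with ha
  have ha0 : 0 ≤ a := by positivity
  have ha2 : a * a = 1 / 2 := by
    rw [ha, ← mul_inv, Real.mul_self_sqrt (by norm_num : (0:ℝ) ≤ 2)]
    norm_num
  have haC : (a : ℂ) * (a : ℂ) = 1 / 2 := by
    rw [← Complex.ofReal_mul, ha2]; norm_num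
  set z : Fin n := ⟨0, by omega⟩ with hz
  set l : Fin n := ⟨n - 1, by omega⟩ with hl
  have hzl : z ≠ l := by
    simp only [hz, hl, Fin.ne_iff_vne]; omega
  have hzr : z.rev = l := by
    ext; rw [Fin.val_rev]
  have hlr : l.rev = z := by rw [← hzr, Fin.rev_rev]
  set ξ : PiLp 2 (fun _ : Fin n => H) :=
      WithLp.toLp 2 (fun i => if i = z then (a : ℂ) • x else if i = l then (ε * a) • x else 0) with hξ
  have hξz : ξ z = (a : ℂ) • x := by simp [hξ]
  have hξl : ξ l = (ε * a) • x := by simp [hξ, hzl.symm]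
  have hε1 : ‖ε‖ = 1 := by rcases hε with rfl | rfl <;> simp
  have hξ1 : ‖ξ‖ = 1 := by
    have h2 : ‖ξ‖ ^ 2 = 1 := by
      rw [PiLp.norm_sq_eq_of_L2,
        ← Finset.sum_subset (Finset.subset_univ ({z, l} : Finset (Fin n)))]
      · rw [Finset.sum_pair hzl, hξz, hξl]
        rw [norm_smul, norm_smul, norm_mul, Complex.norm_real, hε1,
          Real.norm_eq_abs, abs_of_nonneg ha0, hx]
        ring_nf
        nlinarith [ha2]
      · intro i _ hi
        simp only [Finset.mem_insert, Finset.mem_singleton, not_or] at hi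
        simp [hξ, hi.1, hi.2]
    rw [← Real.sqrt_one, ← h2, Real.sqrt_sq (norm_nonneg _)]
  have hinner : (inner ℂ (blockOp n (fun i j =>
        if i = j then T else if (i : ℕ) + (j : ℕ) = n - 1 then S else 0) ξ) ξ : ℂ)
      = inner ℂ ((T + ε • S) x) x := by
    rw [inner_R,
      ← Finset.sum_subset (Finset.subset_univ ({z, l} : Finset (Fin n)))]
    · rw [Finset.sum_pair hzl]
      have h1 : ¬ z = z.rev := by rw [hzr]; exact hzl
      have h2 : ¬ l = l.rev := by rw [hlr]; exact hzl.symm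
      rw [if_neg h1, if_neg h2, hzr, hlr, hξz, hξl]
      simp only [map_smul, inner_smul_left, inner_smul_right, map_mul,
        Complex.conj_ofReal, ContinuousLinearMap.add_apply,
        ContinuousLinearMap.smul_apply, inner_add_left, inner_smul_left]
      rcases hε with rfl | rfl
      · simp only [map_one, one_mul, mul_one]
        linear_combination (2 * (inner ℂ (T x) x : ℂ) + 2 * (inner ℂ (S x) x : ℂ)) * haC
      · simp only [map_neg, map_one]
        linear_combination (2 * (inner ℂ (T x) x : ℂ) - 2 * (inner ℂ (S x) x : ℂ)) * haC
    · intro i _ hi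
      simp only [Finset.mem_insert, Finset.mem_singleton, not_or] at hi
      simp [hξ, hi.1, hi.2]
  rw [← hinner]
  exact inner_le_numRadius _ ξ hξ1

theorem stmt10 (T S : H →L[ℂ] H) (n : ℕ) (hn : 3 ≤ n) (hodd : Odd n) :
    numRadius (blockOp n (fun i j =>
        if i = j then T else if (i : ℕ) + (j : ℕ) = n - 1 then S else 0)) =
      max (numRadius (T + S)) (max (numRadius T) (numRadius (T - S))) := by
  refine le_antisymm (upper_bound T S n) (max_le ?_ (max_le ?_ ?_))
  · have := lower_eps T S n hn 1 (Or.inl rfl)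
    rwa [one_smul] at this
  · exact lower_T T S n hn hodd
  · have := lower_eps T S n hn (-1) (Or.inr rfl)
    rwa [neg_smul, one_smul, ← sub_eq_add_neg] at this
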